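/- Let A = ((a_n, r_n))_{n≥0} be an abstract Swiss cheese with ρ(A) < ∞. Then there exists a redundancy-free abstract Swiss cheese B = ((b_n, s_n)) ∈ N with X_B = X_A, μ(B) < ∞, B̄(b_0, s_0) = B̄(a_0, r_0), and such that ρ_E(B) ≤ ρ_E(A) for every subset E ⊆ ℂ; in particular ρ(B) ≤ ρ(A). -/

import Mathlib

open Metric Set Filter Topology ENNReal

noncomputable section

/-- Abstract Swiss cheese space `F = (ℂ × [0,∞))^{ℕ₀}` with the product topology. -/
abbrev ASC := ℕ → ℂ × NNReal

/-- The centre of the `n`-th disk. -/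
def ctr (A : ASC) (n : ℕ) : ℂ := (A n).1

/-- The radius of the `n`-th disk, as a real number. -/
def rad (A : ASC) (n : ℕ) : ℝ := ((A n).2 : ℝ)

/-- The associated Swiss cheese set `X_A`. -/
def Xset (A : ASC) : Set ℂ :=
  closedBall (ctr A 0) (rad A 0) \ ⋃ n : ℕ, ball (ctr A (n + 1)) (rad A (n + 1))

/-- The significant index set `S_A = {n ≥ 1 : r_n > 0}`. -/
def SIdx (A : ASC) : Set ℕ := {n | 1 ≤ n ∧ 0 < rad A n}

/-- The radius sum function `ρ(A) = ∑_{n≥1} r_n`, valued in `[0,∞]`. -/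
def rhoSum (A : ASC) : ℝ≥0∞ := ∑' n : ℕ, ((A (n + 1)).2 : ℝ≥0∞)

/-- The centre bound function `μ(A) = sup_{n≥1} |a_n|`, valued in `[0,∞]`. -/
def muSup (A : ASC) : ℝ≥0∞ := ⨆ n : ℕ, (‖(A (n + 1)).1‖₊ : ℝ≥0∞)

/-- `H_A(E) = {n ∈ S_A : B̄(a_n, r_n) ∩ E ≠ ∅}`. -/
def HIdx (A : ASC) (E : Set ℂ) : Set ℕ :=
  {n | n ∈ SIdx A ∧ (closedBall (ctr A n) (rad A n) ∩ E).Nonempty}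

/-- The local radius sum function `ρ_E(A) = ∑_{n ∈ H_A(E)} r_n`. -/
def rhoLoc (A : ASC) (E : Set ℂ) : ℝ≥0∞ :=
  ∑' n : HIdx A E, ((A (n : ℕ)).2 : ℝ≥0∞)

/-- The discrepancy function of order 1, `δ₁(A) = r_0 − ∑_{n≥1} r_n ∈ [−∞,∞)`. -/
def delta1 (A : ASC) : EReal := (rad A 0 : EReal) - ((rhoSum A : ℝ≥0∞) : EReal)

/-- The discrepancy function of order `α`, `δ_α(A) = r_0^α − ∑_{n≥1} r_n^α ∈ [−∞,∞)`. -/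
def deltaAlpha (α : ℝ) (A : ASC) : EReal :=
  ((((A 0).2 : ℝ≥0∞) ^ α : ℝ≥0∞) : EReal) -
    ((∑' n : ℕ, ((A (n + 1)).2 : ℝ≥0∞) ^ α : ℝ≥0∞) : EReal)

/-- The discrepancy function of order 2. -/
def delta2 (A : ASC) : EReal := deltaAlpha 2 A

/-- `A` is classical. -/
def IsClassicalASC (A : ASC) : Prop :=
  rhoSum A < ⊤ ∧ 0 < rad A 0 ∧
  ∀ k ∈ SIdx A,
    closedBall (ctr A k) (rad A k) ⊆ ball (ctr A 0) (rad A 0) ∧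
    ∀ l ∈ SIdx A, l ≠ k →
      closedBall (ctr A k) (rad A k) ∩ closedBall (ctr A l) (rad A l) = ∅

/-- `A` is semiclassical. -/
def IsSemiclassicalASC (A : ASC) : Prop :=
  rhoSum A < ⊤ ∧ 0 < rad A 0 ∧
  ∀ k ∈ SIdx A,
    ball (ctr A k) (rad A k) ⊆ ball (ctr A 0) (rad A 0) ∧
    ∀ l ∈ SIdx A, l ≠ k →
      ball (ctr A k) (rad A k) ∩ ball (ctr A l) (rad A l) = ∅

/-- Membership in `N`: finite radius sum and `(r_n)_{n≥1}` non-increasing. -/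
def memN (A : ASC) : Prop :=
  rhoSum A < ⊤ ∧ ∀ n : ℕ, 1 ≤ n → (A (n + 1)).2 ≤ (A n).2

/-- Membership in `N(M,R)`. -/
def memNMR (M R : ℝ≥0∞) (A : ASC) : Prop := memN A ∧ muSup A ≤ M ∧ rhoSum A ≤ R

/-- `A` is redundancy-free. -/
def RedundancyFree (A : ASC) : Prop :=
  ∀ k ∈ SIdx A,
    (ball (ctr A k) (rad A k) ∩ closedBall (ctr A 0) (rad A 0)).Nonempty ∧
    ∀ l ∈ SIdx A, l ≠ k → ¬ ball (ctr A k) (rad A k) ⊆ ball (ctr A l) (rad A l)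

/-- `B` is partially above `A`. -/
def PartiallyAbove (B A : ASC) : Prop :=
  closedBall (ctr B 0) (rad B 0) ⊆ closedBall (ctr A 0) (rad A 0) ∧
  ∀ n : ℕ, 1 ≤ n →
    ball (ctr A n) (rad A n) ⊆ (closedBall (ctr B 0) (rad B 0))ᶜ ∨
    ∃ m : ℕ, 1 ≤ m ∧ ball (ctr A n) (rad A n) ⊆ ball (ctr B m) (rad B m)

/-- The set `S̃` of all `B ∈ N(μ(A), ρ(A))` partially above `A`. -/
def Stilde (A : ASC) : Set ASC :=
  {B | memNMR (muSup A) (rhoSum A) B ∧ PartiallyAbove B A}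

/-- `S₁`: the elements of `S̃` on which `δ₁` attains its supremum over `S̃`. -/
def S1 (A : ASC) : Set ASC :=
  {B ∈ Stilde A | delta1 B = sSup (delta1 '' Stilde A)}

/-- `S₂`: the elements of `S₁` on which `δ₂` attains its infimum over `S₁`. -/
def S2 (A : ASC) : Set ASC :=
  {B ∈ S1 A | delta2 B = sInf (delta2 '' S1 A)}

/-- The (classical) error set `E(A)`. -/
def errSet (A : ASC) : Set ℂ :=
  (⋃ m ∈ SIdx A, ⋃ n ∈ SIdx A, ⋃ (_ : m ≠ n),
    closedBall (ctr A m) (rad A m) ∩ closedBall (ctr A n) (rad A n)) ∪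
  ⋃ n ∈ SIdx A, (ball (ctr A 0) (rad A 0))ᶜ ∩ closedBall (ctr A n) (rad A n)

/-- `V(C) = ⋃_{n∈I} U_n`. -/
def VC (I : Set ℕ) (U : ℕ → Set ℂ) : Set ℂ := ⋃ n ∈ I, U n

/-- `F(C) = ⋃_{n∈I} K_n`. -/
def FC (I : Set ℕ) (K : ℕ → Set ℂ) : Set ℂ := ⋃ n ∈ I, K n

/-- The set `L_A(C)` for a controlling collection `C = ((K_n, U_n))_{n∈I}`. -/
def LSet (A : ASC) (I : Set ℕ) (K U : ℕ → Set ℂ) : Set ASC :=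
  {B | memNMR (muSup A) (rhoSum A) B ∧
    (∀ n ∈ I, rhoLoc B (U n) ≤ rhoLoc A (U n)) ∧
    closedBall (ctr B 0) (rad B 0) = closedBall (ctr A 0) (rad A 0) ∧
    (∀ k ∈ SIdx A, closedBall (ctr A k) (rad A k) ∩ VC I U = ∅ →
      ∃ l ∈ SIdx B, ball (ctr B l) (rad B l) = ball (ctr A k) (rad A k)) ∧
    (∀ n ∈ I, ∀ k ∈ SIdx A, (closedBall (ctr A k) (rad A k) ∩ U n).Nonempty →
      (∃ l ∈ SIdx B, ball (ctr B l) (rad B l) = ball (ctr A k) (rad A k)) ∨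
      (∃ l ∈ HIdx B (K n), ball (ctr A k) (rad A k) ⊆ ball (ctr B l) (rad B l)))}

/-- `A` is annular: `a_0 = a_1` and `0 < r_1 < r_0`. -/
def Annular (A : ASC) : Prop := ctr A 0 = ctr A 1 ∧ 0 < rad A 1 ∧ rad A 1 < rad A 0

/-- The annular radius sum `ρ_a(A) = ∑_{n≥2} r_n`. -/
def rhoAnn (A : ASC) : ℝ≥0∞ := ∑' n : ℕ, ((A (n + 2)).2 : ℝ≥0∞)

/-- The annular discrepancy `δ_a(A) = r_0 − r_1 − 2ρ_a(A)`. -/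
def deltaAnn (A : ASC) : EReal :=
  ((rad A 0 - rad A 1 : ℝ) : EReal) - ((2 * rhoAnn A : ℝ≥0∞) : EReal)

/-- The family `Ã` of Lemma 6.4 / Theorem 6.6 (annular classicalisation). -/
def ATilde (A : ASC) : Set ASC :=
  {B | (∀ n : ℕ, 2 ≤ n → (B (n + 1)).2 ≤ (B n).2) ∧
    rhoAnn B ≤ rhoAnn A ∧ muSup B ≤ muSup A ∧ PartiallyAbove B A ∧
    ctr B 0 = ctr A 0 ∧ ctr B 1 = ctr A 0 ∧
    rad A 1 ≤ rad B 1 ∧ rad B 1 ≤ rad B 0 ∧ rad B 0 ≤ rad A 0}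


namespace Stmt5

/-! ### Ball geometry -/

lemma dist_add_le_of_ball_subset {a b : ℂ} {r s : ℝ} (hr : 0 < r)
    (hsub : ball a r ⊆ ball b s) : dist a b + r ≤ s := by
  by_contra hlt
  push_neg at hlt
  obtain ⟨t, ht1, ht2⟩ := exists_between (show max 0 (s - dist a b) < r from
    max_lt hr (by linarith))
  have ht0 : 0 < t := lt_of_le_of_lt (le_max_left _ _) ht1
  have hts : s - dist a b < t := lt_of_le_of_lt (le_max_right _ _) ht1
  set u : ℂ := if a = b then 1 else (a - b) / ((‖a - b‖ : ℝ) : ℂ) with hu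
  have hnu : ‖u‖ = 1 := by
    rw [hu]; split_ifs with hab
    · simp
    · have h0 : ‖a - b‖ ≠ 0 := by
        simpa [sub_eq_zero] using hab
      rw [norm_div, Complex.norm_real, Real.norm_eq_abs,
        abs_of_nonneg (norm_nonneg _)]
      field_simp
  have hxmem : a + (t : ℂ) * u ∈ ball a r := by
    rw [mem_ball, dist_eq_norm]
    have : a + (t : ℂ) * u - a = (t : ℂ) * u := by ring
    rw [this, norm_mul, hnu, mul_one, Complex.norm_real, Real.norm_eq_abs,
      abs_of_pos ht0]
    exact ht2
  have hxb : dist (a + (t : ℂ) * u) b < s := mem_ball.1 (hsub hxmem)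
  by_cases hab : a = b
  · rw [hab] at hxb
    have : b + (t : ℂ) * u - b = (t : ℂ) * u := by ring
    rw [dist_eq_norm, this, norm_mul, hnu, mul_one, Complex.norm_real,
      Real.norm_eq_abs, abs_of_pos ht0] at hxb
    have : dist a b = 0 := by simp [hab]
    linarith
  · have h0 : ‖a - b‖ ≠ 0 := by simpa [sub_eq_zero] using hab
    have hc : ((‖a - b‖ : ℝ) : ℂ) ≠ 0 := by exact_mod_cast h0
    have key : a - b = ((‖a - b‖ : ℝ) : ℂ) * u := by
      rw [hu, if_neg hab, ← mul_div_assoc, mul_div_cancel_left₀ _ hc]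
    have : a + (t : ℂ) * u - b = ((‖a - b‖ + t : ℝ) : ℂ) * u := by
      push_cast
      rw [add_mul]
      rw [← key]
      ring
    rw [dist_eq_norm, this, norm_mul, hnu, mul_one, Complex.norm_real,
      Real.norm_eq_abs, abs_of_pos (by positivity : (0:ℝ) < ‖a - b‖ + t)] at hxb
    have hd : dist a b = ‖a - b‖ := Complex.dist_eq a b
    linarith

lemma ball_subset_ball_iff' {a b : ℂ} {r s : ℝ} (hr : 0 < r) :
    ball a r ⊆ ball b s ↔ dist a b + r ≤ s :=
  ⟨dist_add_le_of_ball_subset hr, fun h =>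
    ball_subset_ball' (by rw [dist_comm] at h ⊢; linarith)⟩

lemma eq_of_ball_eq {a b : ℂ} {r s : ℝ} (hr : 0 < r) (hs : 0 < s)
    (h : ball a r = ball b s) : a = b ∧ r = s := by
  have h1 := (ball_subset_ball_iff' hr).1 h.le
  have h2 := (ball_subset_ball_iff' hs).1 h.ge
  rw [dist_comm] at h2
  have hd : dist a b = 0 := le_antisymm (by linarith) dist_nonneg
  exact ⟨dist_eq_zero.1 hd, by linarith⟩

lemma rad_le_of_ball_subset {A : ASC} {m j : ℕ}
    (hm : 0 < rad A m)
    (hsub : ball (ctr A m) (rad A m) ⊆ ball (ctr A j) (rad A j)) :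
    (A m).2 ≤ (A j).2 := by
  have := dist_add_le_of_ball_subset hm hsub
  have : rad A m ≤ rad A j := by
    have hd : (0:ℝ) ≤ dist (ctr A m) (ctr A j) := dist_nonneg
    linarith
  exact_mod_cast this

/-! ### tsum comparison -/

lemma tsum_le_of_injOn (f g : ℕ → ℝ≥0∞) (φ : ℕ → ℕ)
    (hinj : Set.InjOn φ (Function.support f))
    (hval : ∀ n ∈ Function.support f, f n = g (φ n)) :
    ∑' n, f n ≤ ∑' n, g n := by
  rw [← tsum_subtype_support f]
  have h1 : ∑' x : Function.support f, f x = ∑' x : Function.support f, g (φ x) :=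
    tsum_congr fun x => hval x x.2
  rw [h1]
  exact ENNReal.tsum_comp_le_tsum_of_injective
    (fun x y hxy => Subtype.ext (hinj x.2 y.2 hxy)) g

/-! ### The good index set -/

variable (A : ASC)

def bl (n : ℕ) : Set ℂ := ball (ctr A n) (rad A n)

def cB0 : Set ℂ := closedBall (ctr A 0) (rad A 0)

def Good : Set ℕ :=
  {n | 1 ≤ n ∧ 0 < rad A n ∧ (bl A n ∩ cB0 A).Nonempty ∧
    (∀ j, 1 ≤ j → bl A n ⊆ bl A j → bl A n = bl A j) ∧
    (∀ m, 1 ≤ m → A m = A n → n ≤ m)}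

def precR (m n : ℕ) : Prop := (A n).2 < (A m).2 ∨ ((A m).2 = (A n).2 ∧ m < n)

lemma precR_trans {m n p : ℕ} (h1 : precR A m n) (h2 : precR A n p) : precR A m p := by
  rcases h1 with h1 | ⟨h1, h1'⟩ <;> rcases h2 with h2 | ⟨h2, h2'⟩
  · exact Or.inl (h2.trans h1)
  · exact Or.inl (h2 ▸ h1)
  · exact Or.inl (lt_of_lt_of_le h2 h1.ge)
  · exact Or.inr ⟨h1.trans h2, h1'.trans h2'⟩

lemma precR_irrefl (n : ℕ) : ¬ precR A n n := by
  rintro (h | ⟨_, h⟩) <;> exact absurd h (lt_irrefl _)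

lemma precR_total {m n : ℕ} (h : m ≠ n) : precR A m n ∨ precR A n m := by
  rcases lt_trichotomy (A m).2 (A n).2 with hlt | heq | hgt
  · exact Or.inr (Or.inl hlt)
  · rcases lt_or_gt_of_ne h with hmn | hmn
    · exact Or.inl (Or.inr ⟨heq, hmn⟩)
    · exact Or.inr (Or.inr ⟨heq.symm, hmn⟩)
  · exact Or.inl (Or.inl hgt)

def Pset (n : ℕ) : Set ℕ := {m | m ∈ Good A ∧ precR A m n}

def rk (n : ℕ) : ℕ := (Pset A n).ncard

variable {A}

lemma finite_ge (h : rhoSum A < ⊤) {c : NNReal} (hc : 0 < c) :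
    {m : ℕ | 1 ≤ m ∧ c ≤ (A m).2}.Finite := by
  have hsum : Summable (fun n => (A (n + 1)).2) :=
    ENNReal.tsum_coe_ne_top_iff_summable.1 h.ne
  have hsum' : Summable (fun n => ((A (n + 1)).2 : ℝ)) := NNReal.summable_coe.2 hsum
  have htend : Tendsto (fun n => ((A (n + 1)).2 : ℝ)) atTop (nhds 0) :=
    hsum'.tendsto_atTop_zero
  have hev : ∀ᶠ n in atTop, ((A (n + 1)).2 : ℝ) < c := by
    exact htend.eventually_lt_const (by exact_mod_cast hc)
  rw [← Nat.cofinite_eq_atTop, eventually_cofinite] at hev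
  have hfin : {n : ℕ | c ≤ (A (n + 1)).2}.Finite := by
    refine hev.subset fun n hn => ?_
    simp only [mem_setOf_eq, not_lt]
    exact_mod_cast hn
  have : {m : ℕ | 1 ≤ m ∧ c ≤ (A m).2} ⊆ (fun n => n + 1) '' {n : ℕ | c ≤ (A (n + 1)).2} := by
    rintro m ⟨hm1, hmc⟩
    exact ⟨m - 1, by simpa [Nat.sub_add_cancel hm1] using hmc, Nat.sub_add_cancel hm1⟩
  exact (hfin.image _).subset this

lemma Pset_finite (h : rhoSum A < ⊤) {n : ℕ} (hn : 0 < (A n).2) :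
    (Pset A n).Finite := by
  refine (finite_ge h hn).subset ?_
  rintro m ⟨hmG, hprec⟩
  refine ⟨hmG.1, ?_⟩
  rcases hprec with h1 | ⟨h1, _⟩
  · exact h1.le
  · exact h1.ge

lemma Good_rad_pos {n : ℕ} (hn : n ∈ Good A) : 0 < (A n).2 := by
  have := hn.2.1
  rw [rad] at this
  exact_mod_cast this

lemma rk_lt_rk (h : rhoSum A < ⊤) {m n : ℕ} (hm : m ∈ Good A) (hn : n ∈ Good A)
    (hp : precR A m n) : rk A m < rk A n := by
  have hfin : (Pset A n).Finite := Pset_finite h (Good_rad_pos hn)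
  have hss : Pset A m ⊂ Pset A n := by
    constructor
    · rintro j ⟨hjG, hjp⟩
      exact ⟨hjG, precR_trans A hjp hp⟩
    · intro hsub
      have : m ∈ Pset A m := hsub ⟨hm, hp⟩
      exact precR_irrefl A m this.2
  exact Set.ncard_lt_ncard hss hfin

lemma rk_injOn (h : rhoSum A < ⊤) {m n : ℕ} (hm : m ∈ Good A) (hn : n ∈ Good A)
    (heq : rk A m = rk A n) : m = n := by
  by_contra hne
  rcases precR_total A hne with hp | hp
  · exact absurd heq (rk_lt_rk h hm hn hp).ne
  · exact absurd heq.symm (rk_lt_rk h hn hm hp).ne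

lemma rk_surj (h : rhoSum A < ⊤) {n : ℕ} (hn : n ∈ Good A) {k : ℕ}
    (hk : k < rk A n) : ∃ m ∈ Good A, rk A m = k := by
  classical
  have hfin : (Pset A n).Finite := Pset_finite h (Good_rad_pos hn)
  set t := hfin.toFinset with ht
  have hcard : t.card = rk A n := by
    rw [rk, Set.ncard_eq_toFinset_card _ hfin]
  have hmem : ∀ m ∈ t, m ∈ Pset A n := fun m hm => hfin.mem_toFinset.1 hm
  have hsubset : t.image (rk A) ⊆ Finset.range (rk A n) := by
    intro x hx
    obtain ⟨m, hm, rfl⟩ := Finset.mem_image.1 hx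
    have hmP := hmem m hm
    exact Finset.mem_range.2 (rk_lt_rk h hmP.1 hn hmP.2)
  have hinj : Set.InjOn (rk A) ↑t := by
    intro x hx y hy hxy
    exact rk_injOn h (hmem x (by simpa using hx)).1 (hmem y (by simpa using hy)).1 hxy
  have hcard2 : (t.image (rk A)).card = rk A n := by
    rw [Finset.card_image_of_injOn hinj, hcard]
  have heq : t.image (rk A) = Finset.range (rk A n) :=
    Finset.eq_of_subset_of_card_le hsubset (by rw [hcard2]; simp)
  have : k ∈ t.image (rk A) := by rw [heq]; exact Finset.mem_range.2 hk
  obtain ⟨m, hm, hmk⟩ := Finset.mem_image.1 this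
  exact ⟨m, (hmem m hm).1, hmk⟩

/-! ### Covering lemma -/

lemma covering (h : rhoSum A < ⊤) {n : ℕ} (hn1 : 1 ≤ n) (hnr : 0 < rad A n)
    (hne : (bl A n ∩ cB0 A).Nonempty) :
    ∃ m ∈ Good A, bl A n ⊆ bl A m := by
  classical
  have hnr' : 0 < (A n).2 := by rw [rad] at hnr; exact_mod_cast hnr
  set T : Set ℕ := {j | 1 ≤ j ∧ bl A n ⊆ bl A j} with hT
  have hTfin : T.Finite := by
    refine (finite_ge h hnr').subset ?_
    rintro j ⟨hj1, hjsub⟩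
    exact ⟨hj1, rad_le_of_ball_subset hnr hjsub⟩
  have hTne : T.Nonempty := ⟨n, hn1, subset_rfl⟩
  obtain ⟨j0, hj0T, hj0max⟩ := Set.Finite.exists_maximalFor (bl A) T hTfin hTne
  have hj0sub : bl A n ⊆ bl A j0 := hj0T.2
  have hj0r : 0 < rad A j0 := by
    have : (bl A j0).Nonempty := (nonempty_ball.2 hnr).mono hj0sub
    exact nonempty_ball.1 this
  have hj0max' : ∀ j, 1 ≤ j → bl A j0 ⊆ bl A j → bl A j0 = bl A j := by
    intro j hj1 hjsub
    exact hjsub.antisymm (hj0max ⟨hj1, hj0sub.trans hjsub⟩ hjsub)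
  have hj0ne : (bl A j0 ∩ cB0 A).Nonempty := by
    obtain ⟨x, hx1, hx2⟩ := hne
    exact ⟨x, hj0sub hx1, hx2⟩
  -- take the least representative
  have hex : ∃ m, 1 ≤ m ∧ A m = A j0 := ⟨j0, hj0T.1, rfl⟩
  set m := Nat.find hex with hm
  obtain ⟨hm1, hmA⟩ := Nat.find_spec hex
  have hblm : bl A m = bl A j0 := by
    rw [bl, bl, ctr, ctr, rad, rad, hmA]
  refine ⟨m, ⟨hm1, ?_, ?_, ?_, ?_⟩, ?_⟩
  · rw [rad, hmA]; exact hj0r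
  · rw [bl, ctr, rad, hmA]; exact hj0ne
  · intro j hj1 hjsub
    rw [hblm] at hjsub ⊢
    exact hj0max' j hj1 hjsub
  · intro m' hm'1 hm'A
    exact Nat.find_le ⟨hm'1, hm'A.trans hmA⟩
  · rw [hblm]; exact hj0sub

/-! ### The construction -/

variable (A)

def att (k : ℕ) : Prop := ∃ n ∈ Good A, rk A n = k

open Classical in
def pick (k : ℕ) : ℕ := if h : att A k then h.choose else 0

open Classical in
def Bc : ASC := fun i =>
  match i with
  | 0 => A 0
  | k + 1 => if att A k then A (pick A k) else ((A 0).1, 0)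

variable {A}

lemma Bc_zero : Bc A 0 = A 0 := rfl

lemma pick_spec {k : ℕ} (hk : att A k) : pick A k ∈ Good A ∧ rk A (pick A k) = k := by
  rw [pick, dif_pos hk]
  exact ⟨hk.choose_spec.1, hk.choose_spec.2⟩

lemma Bc_succ_pos {k : ℕ} (hk : att A k) : Bc A (k + 1) = A (pick A k) := by
  rw [Bc, if_pos hk]

lemma Bc_succ_neg {k : ℕ} (hk : ¬ att A k) : Bc A (k + 1) = ((A 0).1, 0) := by
  rw [Bc, if_neg hk]

lemma pick_eq (h : rhoSum A < ⊤) {n : ℕ} (hn : n ∈ Good A) :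
    pick A (rk A n) = n := by
  have hk : att A (rk A n) := ⟨n, hn, rfl⟩
  obtain ⟨hmem, hrk⟩ := pick_spec hk
  exact rk_injOn h hmem hn hrk

lemma att_of_lt (h : rhoSum A < ⊤) {k k' : ℕ} (hk : att A k') (hlt : k < k') :
    att A k := by
  obtain ⟨n, hn, rfl⟩ := hk
  exact rk_surj h hn hlt

lemma pick_ge_one {k : ℕ} (hk : att A k) : 1 ≤ pick A k := (pick_spec hk).1.1

/-- significant indices of `Bc` -/
lemma Bc_rad_pos {k : ℕ} (hk : att A k) : 0 < rad (Bc A) (k + 1) := by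
  rw [rad, Bc_succ_pos hk]
  exact_mod_cast Good_rad_pos (pick_spec hk).1

lemma Bc_rad_zero {k : ℕ} (hk : ¬ att A k) : (Bc A (k + 1)).2 = 0 := by
  rw [Bc_succ_neg hk]

lemma SIdx_Bc {n : ℕ} (hn : n ∈ SIdx (Bc A)) :
    ∃ k, n = k + 1 ∧ att A k := by
  obtain ⟨hn1, hnr⟩ := hn
  obtain ⟨k, rfl⟩ := Nat.exists_eq_add_of_le hn1
  refine ⟨k, by ring, ?_⟩
  by_contra hk
  rw [rad] at hnr
  rw [show 1 + k = k + 1 from by ring] at hnr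
  rw [Bc_rad_zero hk] at hnr
  simp at hnr

/-! ### Monotone radii -/

lemma Bc_mono (h : rhoSum A < ⊤) (n : ℕ) (hn : 1 ≤ n) :
    (Bc A (n + 1)).2 ≤ (Bc A n).2 := by
  obtain ⟨k, rfl⟩ := Nat.exists_eq_add_of_le hn
  rw [show 1 + k = k + 1 from by ring]
  by_cases hk1 : att A (k + 1)
  · have hk : att A k := att_of_lt h hk1 (Nat.lt_succ_self k)
    rw [Bc_succ_pos hk1, Bc_succ_pos hk]
    by_contra hlt
    push_neg at hlt
    have hp : precR A (pick A (k + 1)) (pick A k) := Or.inl hlt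
    have hlt2 := rk_lt_rk h (pick_spec hk1).1 (pick_spec hk).1 hp
    rw [(pick_spec hk1).2, (pick_spec hk).2] at hlt2
    omega
  · rw [Bc_rad_zero hk1]
    exact zero_le

lemma att_of_support {k : ℕ} (hk : ((Bc A (k + 1)).2 : ℝ≥0∞) ≠ 0) : att A k := by
  by_contra hc
  rw [Bc_rad_zero hc] at hk
  simp at hk

lemma rhoSum_Bc_le (h : rhoSum A < ⊤) : rhoSum (Bc A) ≤ rhoSum A := by
  refine tsum_le_of_injOn (fun k => ((Bc A (k + 1)).2 : ℝ≥0∞))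
    (fun n => ((A (n + 1)).2 : ℝ≥0∞)) (fun k => pick A k - 1) ?_ ?_
  · intro k hk k' hk' heq
    dsimp only at heq
    have hak : att A k := att_of_support hk
    have hak' : att A k' := att_of_support hk'
    have g1 := pick_ge_one hak
    have g2 := pick_ge_one hak'
    have hpp : pick A k = pick A k' := by omega
    have h1 := (pick_spec hak).2
    have h2 := (pick_spec hak').2
    rw [hpp] at h1
    omega
  · intro k hk
    have hak : att A k := att_of_support hk
    show ((Bc A (k + 1)).2 : ℝ≥0∞) = ((A (pick A k - 1 + 1)).2 : ℝ≥0∞)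
    rw [Nat.sub_add_cancel (pick_ge_one hak), Bc_succ_pos hak]

/-! ### Local radius sums -/

lemma HIdx_pick {E : Set ℂ} {n : ℕ} (hn : n ∈ HIdx (Bc A) E) :
    ∃ k, n = k + 1 ∧ att A k ∧ pick A k ∈ HIdx A E ∧ Bc A n = A (pick A k) := by
  obtain ⟨k, rfl, hatt⟩ := SIdx_Bc hn.1
  have hB : Bc A (k + 1) = A (pick A k) := Bc_succ_pos hatt
  refine ⟨k, rfl, hatt, ⟨⟨pick_ge_one hatt, ?_⟩, ?_⟩, hB⟩
  · show (0:ℝ) < rad A (pick A k)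
    rw [rad]
    exact_mod_cast Good_rad_pos (pick_spec hatt).1
  · have h2 := hn.2
    show (closedBall ((A (pick A k)).1) (((A (pick A k)).2 : ℝ)) ∩ E).Nonempty
    rw [← hB]
    exact h2
  
lemma rhoLoc_Bc_le (h : rhoSum A < ⊤) (E : Set ℂ) : rhoLoc (Bc A) E ≤ rhoLoc A E := by
  have e1 : rhoLoc (Bc A) E
      = ∑' n, (HIdx (Bc A) E).indicator (fun n => ((Bc A n).2 : ℝ≥0∞)) n :=
    tsum_subtype (HIdx (Bc A) E) (fun n => ((Bc A n).2 : ℝ≥0∞))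
  have e2 : rhoLoc A E
      = ∑' n, (HIdx A E).indicator (fun n => ((A n).2 : ℝ≥0∞)) n :=
    tsum_subtype (HIdx A E) (fun n => ((A n).2 : ℝ≥0∞))
  rw [e1, e2]
  refine tsum_le_of_injOn _ _ (fun n => pick A (n - 1)) ?_ ?_
  · intro n hn n' hn' heq
    have hnH : n ∈ HIdx (Bc A) E := Set.support_indicator_subset hn
    have hn'H : n' ∈ HIdx (Bc A) E := Set.support_indicator_subset hn'
    obtain ⟨k, rfl, hatt, -, -⟩ := HIdx_pick hnH
    obtain ⟨k', rfl, hatt', -, -⟩ := HIdx_pick hn'H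
    simp only [Nat.add_sub_cancel] at heq
    have h1 := (pick_spec hatt).2
    have h2 := (pick_spec hatt').2
    rw [heq] at h1
    omega
  · intro n hn
    have hnH : n ∈ HIdx (Bc A) E := Set.support_indicator_subset hn
    obtain ⟨k, rfl, hatt, hpH, hB⟩ := HIdx_pick hnH
    simp only [Nat.add_sub_cancel]
    rw [Set.indicator_of_mem hnH, Set.indicator_of_mem hpH, hB]

/-! ### Swiss cheese set equality -/

lemma Xset_Bc (h : rhoSum A < ⊤) : Xset (Bc A) = Xset A := by
  have hc : ctr (Bc A) 0 = ctr A 0 := rfl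
  have hr : rad (Bc A) 0 = rad A 0 := rfl
  rw [Xset, Xset, hc, hr]
  ext x
  simp only [mem_diff, mem_iUnion, not_exists]
  constructor
  · rintro ⟨hx0, hx⟩
    refine ⟨hx0, fun n hxn => ?_⟩
    have hr1 : 0 < rad A (n + 1) :=
      lt_of_le_of_lt dist_nonneg (mem_ball.1 hxn)
    have hne : (bl A (n + 1) ∩ cB0 A).Nonempty := ⟨x, hxn, hx0⟩
    obtain ⟨m, hmG, hsub⟩ := covering h (Nat.succ_le_succ (Nat.zero_le n)) hr1 hne
    have hatt : att A (rk A m) := ⟨m, hmG, rfl⟩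
    refine hx (rk A m) ?_
    have hBc : Bc A (rk A m + 1) = A m := by rw [Bc_succ_pos hatt, pick_eq h hmG]
    show x ∈ ball (ctr (Bc A) (rk A m + 1)) (rad (Bc A) (rk A m + 1))
    show x ∈ ball ((Bc A (rk A m + 1)).1) (((Bc A (rk A m + 1)).2 : ℝ))
    rw [hBc]
    exact hsub hxn
  · rintro ⟨hx0, hx⟩
    refine ⟨hx0, fun k hxk => ?_⟩
    by_cases hatt : att A k
    · have hBc : Bc A (k + 1) = A (pick A k) := Bc_succ_pos hatt
      have hxk' : x ∈ ball ((A (pick A k)).1) (((A (pick A k)).2 : ℝ)) := by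
        rw [← hBc]; exact hxk
      have h1 := pick_ge_one hatt
      have hxp := hx (pick A k - 1)
      rw [Nat.sub_add_cancel h1] at hxp
      exact hxp hxk'
    · have : rad (Bc A) (k + 1) = 0 := by
        show ((Bc A (k + 1)).2 : ℝ) = 0
        rw [Bc_rad_zero hatt]
        simp
      rw [this, ball_zero] at hxk
      exact hxk

/-! ### Redundancy-freeness -/

lemma redundancyFree_Bc (h : rhoSum A < ⊤) : RedundancyFree (Bc A) := by
  intro kk hkk
  obtain ⟨k, rfl, hatt⟩ := SIdx_Bc hkk
  have hBk : Bc A (k + 1) = A (pick A k) := Bc_succ_pos hatt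
  have hpG := (pick_spec hatt).1
  constructor
  · show (ball ((Bc A (k + 1)).1) (((Bc A (k + 1)).2 : ℝ)) ∩
      closedBall (ctr A 0) (rad A 0)).Nonempty
    rw [hBk]
    exact hpG.2.2.1
  · rintro l hl hne hsub
    obtain ⟨k', rfl, hatt'⟩ := SIdx_Bc hl
    have hBk' : Bc A (k' + 1) = A (pick A k') := Bc_succ_pos hatt'
    have hnn' : pick A k ≠ pick A k' := by
      intro hEq
      apply hne
      have h1 := (pick_spec hatt).2
      have h2 := (pick_spec hatt').2
      rw [hEq] at h1
      omega
    have hsub' : bl A (pick A k) ⊆ bl A (pick A k') := by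
      show ball ((A (pick A k)).1) (((A (pick A k)).2 : ℝ)) ⊆
        ball ((A (pick A k')).1) (((A (pick A k')).2 : ℝ))
      rw [← hBk, ← hBk']
      exact hsub
    have hEqb : bl A (pick A k) = bl A (pick A k') :=
      hpG.2.2.2.1 (pick A k') (pick_ge_one hatt') hsub'
    have hp1 : 0 < rad A (pick A k) := hpG.2.1
    have hp2 : 0 < rad A (pick A k') := (pick_spec hatt').1.2.1
    obtain ⟨hcEq, hrEq⟩ := eq_of_ball_eq hp1 hp2 hEqb
    have hAeq : A (pick A k) = A (pick A k') := by
      have h2 : (A (pick A k)).2 = (A (pick A k')).2 := by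
        apply NNReal.coe_injective
        exact hrEq
      exact Prod.ext hcEq h2
    have hle1 : pick A k ≤ pick A k' :=
      hpG.2.2.2.2 (pick A k') (pick_ge_one hatt') hAeq.symm
    have hle2 : pick A k' ≤ pick A k :=
      (pick_spec hatt').1.2.2.2.2 (pick A k) (pick_ge_one hatt) hAeq
    exact hnn' (le_antisymm hle1 hle2)

/-! ### Centre bound -/

lemma muSup_Bc_lt (h : rhoSum A < ⊤) : muSup (Bc A) < ⊤ := by
  set C : NNReal := ‖(A 0).1‖₊ + ‖(A 0).1‖₊ + (A 0).2 + (rhoSum A).toNNReal with hC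
  have hb : ∀ k, ‖(Bc A (k + 1)).1‖₊ ≤ C := by
    intro k
    by_cases hatt : att A k
    · have hpG := (pick_spec hatt).1
      obtain ⟨x, hx1, hx2⟩ := hpG.2.2.1
      rw [Bc_succ_pos hatt]
      set n := pick A k with hn
      have hx1' : ‖x - (A n).1‖ < ((A n).2 : ℝ) := by
        have := mem_ball.1 hx1
        rwa [dist_eq_norm] at this
      have hx2' : ‖x - (A 0).1‖ ≤ ((A 0).2 : ℝ) := by
        have := mem_closedBall.1 hx2
        rwa [dist_eq_norm] at this
      have hradle : ((A n).2 : ℝ) ≤ ((rhoSum A).toNNReal : ℝ) := by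
        have hn1 : 1 ≤ n := hpG.1
        have h1 : ((A n).2 : ℝ≥0∞) ≤ rhoSum A := by
          have h2 : ((A ((n - 1) + 1)).2 : ℝ≥0∞) ≤ rhoSum A := ENNReal.le_tsum (n - 1)
          rwa [Nat.sub_add_cancel hn1] at h2
        have h3 := ENNReal.toNNReal_mono h.ne h1
        rw [ENNReal.toNNReal_coe] at h3
        exact_mod_cast h3
      rw [← NNReal.coe_le_coe]
      push_cast [hC]
      have e1 : ‖(A n).1‖ ≤ ‖(A n).1 - x‖ + ‖x‖ := by
        simpa using norm_add_le ((A n).1 - x) x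
      have e2 : ‖x‖ ≤ ‖x - (A 0).1‖ + ‖(A 0).1‖ := by
        simpa using norm_add_le (x - (A 0).1) ((A 0).1)
      have e3 : ‖(A n).1 - x‖ = ‖x - (A n).1‖ := norm_sub_rev _ _
      have h4 : ((rhoSum A).toNNReal : ℝ) = (rhoSum A).toReal := rfl
      have h5 : (0:ℝ) ≤ ‖(A 0).1‖ := norm_nonneg _
      linarith
    · rw [Bc_succ_neg hatt]
      rw [← NNReal.coe_le_coe]
      push_cast [hC]
      have h1 : (0:ℝ) ≤ ‖(A 0).1‖ := norm_nonneg _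
      have h2 : (0:ℝ) ≤ ((A 0).2 : ℝ) := (A 0).2.coe_nonneg
      have h3 : (0:ℝ) ≤ ((rhoSum A).toNNReal : ℝ) := NNReal.coe_nonneg _
      have h4 : ((rhoSum A).toNNReal : ℝ) = (rhoSum A).toReal := rfl
      linarith
  have hle : muSup (Bc A) ≤ (C : ℝ≥0∞) := by
    rw [muSup]
    exact iSup_le fun k => ENNReal.coe_le_coe.2 (hb k)
  exact lt_of_le_of_lt hle ENNReal.coe_lt_top

end Stmt5

/-- Elimination of redundancy (Lemma 4.3): every abstract Swiss cheese with
finite radius sum can be replaced by a redundancy-free one in `N` with the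
same Swiss cheese set, the same closed disk, finite centre bound, and smaller
local radius sums. -/
theorem stmt5 (A : ASC) (h : rhoSum A < ⊤) :
    ∃ B : ASC, RedundancyFree B ∧ memN B ∧ Xset B = Xset A ∧ muSup B < ⊤ ∧
      closedBall (ctr B 0) (rad B 0) = closedBall (ctr A 0) (rad A 0) ∧
      (∀ E : Set ℂ, rhoLoc B E ≤ rhoLoc A E) ∧ rhoSum B ≤ rhoSum A := by
  refine ⟨Stmt5.Bc A, Stmt5.redundancyFree_Bc h,
    ⟨lt_of_le_of_lt (Stmt5.rhoSum_Bc_le h) h, Stmt5.Bc_mono h⟩,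
    Stmt5.Xset_Bc h, Stmt5.muSup_Bc_lt h, rfl,
    fun E => Stmt5.rhoLoc_Bc_le h E, Stmt5.rhoSum_Bc_le h⟩

end
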